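/- Let G be a finite type and F : Finset G → ℝ a monotone, nonnegative, submodular set function with F(∅) = 0. Let S_k be the set produced by k steps of the greedy algorithm (at each step adding an element maximizing the marginal gain), and let OPT_k = max over subsets S with |S| = k of F(S). Then F(S_k) ≥ (1 − (1 − 1/k)^k) · OPT_k ≥ (1 − 1/e) · OPT_k. -/

import Mathlib

private lemma telescope_submod {G : Type*} [DecidableEq G]
    (F : Finset G → ℝ)
    (hsub : ∀ X Y : Finset G, X ⊆ Y → ∀ g : G,
      F (insert g Y) - F Y ≤ F (insert g X) - F X) :
    ∀ (B A : Finset G), F (A ∪ B) - F A ≤ ∑ g ∈ B, (F (insert g A) - F A) := by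
  intro B
  induction B using Finset.induction_on with
  | empty => simp
  | @insert b B hb ih =>
    intro A
    rw [Finset.sum_insert hb]
    have h1 : F (A ∪ insert b B) = F (insert b (A ∪ B)) := by
      rw [Finset.union_insert]
    have h2 := hsub A (A ∪ B) Finset.subset_union_left b
    have h3 := ih A
    linarith [h1 ▸ (le_refl (F (A ∪ insert b B)))]

theorem greedy_submodular_approximation {G : Type*} [Fintype G] [DecidableEq G]
    (F : Finset G → ℝ) (hF0 : F ∅ = 0)
    (hmono : ∀ X Y : Finset G, X ⊆ Y → F X ≤ F Y)
    (hsub : ∀ X Y : Finset G, X ⊆ Y → ∀ g : G,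
      F (insert g Y) - F Y ≤ F (insert g X) - F X)
    (hnonneg : ∀ X : Finset G, 0 ≤ F X)
    (k : ℕ) (hk : 1 ≤ k) (hkcard : k ≤ Fintype.card G)
    (S : ℕ → Finset G) (hS0 : S 0 = ∅)
    (hgreedy : ∀ i < k, ∃ g : G, g ∉ S i ∧ S (i + 1) = insert g (S i) ∧
      ∀ g' : G, F (insert g' (S i)) ≤ F (insert g (S i)))
    (OPT : ℝ)
    (hOPT : IsGreatest {x : ℝ | ∃ T : Finset G, T.card = k ∧ F T = x} OPT) :
    (1 - (1 - 1 / (k : ℝ)) ^ k) * OPT ≤ F (S k) ∧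
      (1 - 1 / Real.exp 1) * OPT ≤ (1 - (1 - 1 / (k : ℝ)) ^ k) * OPT := by
  obtain ⟨⟨T, hTcard, hTF⟩, _⟩ := hOPT
  have hOPTnn : 0 ≤ OPT := hTF ▸ hnonneg T
  have hkpos : (0:ℝ) < k := by exact_mod_cast hk
  have hk1 : (1:ℝ) ≤ k := by exact_mod_cast hk
  have h1k : 0 ≤ 1 - 1 / (k:ℝ) := by
    have : 1 / (k:ℝ) ≤ 1 := by
      rw [div_le_one hkpos]; exact hk1
    linarith
  -- per-step inequality
  have key : ∀ i, i < k → OPT - F (S (i+1)) ≤ (1 - 1/(k:ℝ)) * (OPT - F (S i)) := by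
    intro i hi
    obtain ⟨g, hg, hSi1, hmax⟩ := hgreedy i hi
    set X := OPT - F (S i) with hX
    set Y := F (S (i+1)) - F (S i) with hY
    have hXkY : X ≤ (k:ℝ) * Y := by
      have h1 : OPT ≤ F (S i ∪ T) := by
        rw [← hTF]; exact hmono T _ Finset.subset_union_right
      have h2 := telescope_submod F hsub T (S i)
      have h3 : ∑ g' ∈ T, (F (insert g' (S i)) - F (S i)) ≤ ∑ _g' ∈ T, Y := by
        apply Finset.sum_le_sum
        intro x _
        have := hmax x
        rw [hY, hSi1]
        linarith
      rw [Finset.sum_const, hTcard, nsmul_eq_mul] at h3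
      linarith
    have hdiv : X / (k:ℝ) ≤ Y := by
      rw [div_le_iff₀ hkpos]; linarith [hXkY]
    have heq : OPT - F (S (i+1)) = X - Y := by rw [hX, hY]; ring
    have heq2 : (1 - 1/(k:ℝ)) * X = X - X / (k:ℝ) := by
      field_simp
    rw [heq, heq2]
    linarith
  have hiter : ∀ i, i ≤ k → OPT - F (S i) ≤ (1 - 1/(k:ℝ))^i * OPT := by
    intro i
    induction i with
    | zero => intro _; simp [hS0, hF0]
    | succ n ih =>
      intro hn
      have hnk : n < k := hn
      calc OPT - F (S (n+1)) ≤ (1 - 1/(k:ℝ)) * (OPT - F (S n)) := key n hnk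
        _ ≤ (1 - 1/(k:ℝ)) * ((1 - 1/(k:ℝ))^n * OPT) :=
            mul_le_mul_of_nonneg_left (ih hnk.le) h1k
        _ = (1 - 1/(k:ℝ))^(n+1) * OPT := by ring
  have hfirst : (1 - (1 - 1 / (k : ℝ)) ^ k) * OPT ≤ F (S k) := by
    have := hiter k le_rfl
    nlinarith [this]
  refine ⟨hfirst, ?_⟩
  have hexp : (1 - 1/(k:ℝ))^k ≤ 1 / Real.exp 1 := by
    have h1 : 1 - 1/(k:ℝ) ≤ Real.exp (-(1/(k:ℝ))) := by
      have := Real.add_one_le_exp (-(1/(k:ℝ)))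
      linarith
    have h2 : (1 - 1/(k:ℝ))^k ≤ (Real.exp (-(1/(k:ℝ))))^k :=
      pow_le_pow_left₀ h1k (by linarith [h1]) k
    have h3 : (Real.exp (-(1/(k:ℝ))))^k = Real.exp ((k:ℝ) * (-(1/(k:ℝ)))) :=
      (Real.exp_nat_mul _ k).symm
    have h4 : (k:ℝ) * (-(1/(k:ℝ))) = -1 := by
      field_simp
    rw [h3, h4, Real.exp_neg] at h2
    simpa [one_div] using h2
  apply mul_le_mul_of_nonneg_right _ hOPTnn
  linarith
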